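/- With notation as follows: X a set, for each n a monotone increasing sequence of proper subsets (V^n_m)_m covering X, and Ψ : X → (ℕ → ℕ) given by Ψ(x)(n) = min{m : x ∈ V^n_m}. If g : ℕ → ℕ avoids middles in Ψ[X] with respect to ⟨≤,<⟩ (for each f ∈ Ψ[X], {n : f n ≤ g n} is infinite; for all f, h ∈ Ψ[X], one of {n : f n ≤ g n < h n}, {n : h n ≤ g n < f n} is finite), then the family {V^n_{g(n)} : n ∈ ℕ} is a τ-cover of X. -/

import Mathlib

theorem stmt_15 (X : Type*) (V : ℕ → ℕ → Set X)
    (hmono : ∀ n, Monotone (V n))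
    (hproper : ∀ n m, V n m ≠ Set.univ)
    (hcov : ∀ n, (⋃ m, V n m) = Set.univ)
    (Ψ : X → ℕ → ℕ) (hΨ : ∀ x n, Ψ x n = sInf {m | x ∈ V n m})
    (g : ℕ → ℕ)
    (h1 : ∀ f ∈ Set.range Ψ, {n | f n ≤ g n}.Infinite)
    (h2 : ∀ f ∈ Set.range Ψ, ∀ h ∈ Set.range Ψ,
      {n | f n ≤ g n ∧ g n < h n}.Finite ∨
      {n | h n ≤ g n ∧ g n < f n}.Finite) :
    (∀ n, V n (g n) ≠ Set.univ) ∧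
    (∀ x : X, {n | x ∈ V n (g n)}.Infinite) ∧
    (∀ x y : X,
      {n | x ∈ V n (g n) ∧ y ∉ V n (g n)}.Finite ∨
      {n | y ∈ V n (g n) ∧ x ∉ V n (g n)}.Finite) := by
  have key : ∀ (x : X) (n m : ℕ), x ∈ V n m ↔ Ψ x n ≤ m := by
    intro x n m
    have hne : {m | x ∈ V n m}.Nonempty := by
      have : x ∈ ⋃ m, V n m := (hcov n).symm ▸ Set.mem_univ x
      obtain ⟨m, hm⟩ := Set.mem_iUnion.mp this
      exact ⟨m, hm⟩
    constructor
    · intro hx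
      rw [hΨ]
      exact Nat.sInf_le hx
    · intro hle
      have := Nat.sInf_mem hne
      rw [← hΨ] at this
      exact hmono n hle this
  refine ⟨fun n => hproper n (g n), fun x => ?_, fun x y => ?_⟩
  · have := h1 (Ψ x) ⟨x, rfl⟩
    convert this using 1
    ext n
    simp [key]
  · have := h2 (Ψ x) ⟨x, rfl⟩ (Ψ y) ⟨y, rfl⟩
    rcases this with h | h
    · left; convert h using 1; ext n; simp [key, Nat.not_le]
    · right; convert h using 1; ext n; simp [key, Nat.not_le]
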